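/- There exists a universal constant $C > 0$ with the following property: for every integer $M \ge 1$, every integer $K \ge 1$, and every $\theta \in [0,1)$, there exists a vector $u_{\theta,K} \in \mathbb{C}^M$ with at most $2K+1$ nonzero entries such that $\|u_{\theta,K} - u_\theta\| \le C/\sqrt{K}$, where $u_\theta := (1/M) F_M^H a(\theta)$. In particular, the constant $C$ is independent of $\theta$ and of the dimension $M$. -/

import Mathlib

open scoped BigOperators Matrix

noncomputable section

/-- Squared `ℓ₂` norm of a finitely indexed complex vector. -/
def sqnorm {ι : Type*} [Fintype ι] (x : ι → ℂ) : ℝ := ∑ i, ‖x i‖ ^ 2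

/-- A vector is `s`-sparse if at most `s` of its entries are nonzero. -/
def Sparse {ι : Type*} (s : ℕ) (x : ι → ℂ) : Prop := (Function.support x).ncard ≤ s

/-- Array manifold vector `a(θ) ∈ ℂ^M`, `a(θ)_m = e^{-j 2π m θ}`. -/
def aVec (M : ℕ) (θ : ℝ) : Fin M → ℂ :=
  fun m => Complex.exp (-(((2 * Real.pi * (m : ℕ) * θ) : ℝ) : ℂ) * Complex.I)

/-- The `M × M` DFT matrix, `(F_M)_{m,n} = e^{-j 2π m n / M}`. -/
def dftMat (M : ℕ) : Matrix (Fin M) (Fin M) ℂ :=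
  Matrix.of fun m n => Complex.exp (-(((2 * Real.pi * (m : ℕ) * (n : ℕ) / M) : ℝ) : ℂ) * Complex.I)

/-- Discretized angular representation `u_θ = (1/M) F_M^H a(θ)`. -/
def uVec (M : ℕ) (θ : ℝ) : Fin M → ℂ :=
  (1 / (M : ℂ)) • (dftMat M)ᴴ.mulVec (aVec M θ)

lemma uVec_eq (M : ℕ) (θ : ℝ) (i : Fin M) :
    uVec M θ i = (1 / (M:ℂ)) * ∑ m ∈ Finset.range M,
      Complex.exp (((-(2 * Real.pi * ((θ - (i:ℝ)/M) - round (θ - (i:ℝ)/M))) : ℝ) : ℂ) * Complex.I) ^ m := by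
  set δ : ℝ := θ - (i:ℝ)/M with hδ
  set x : ℝ := -(2*Real.pi*(δ - round δ)) with hx
  have key : ∀ m : Fin M, star (dftMat M m i) * aVec M θ m
      = Complex.exp ((x:ℂ) * Complex.I) ^ (m:ℕ) := by
    intro m
    have h1 : star (dftMat M m i)
        = Complex.exp (((2*Real.pi*(m:ℕ)*(i:ℕ)/M : ℝ) : ℂ) * Complex.I) := by
      rw [dftMat, Matrix.of_apply, Complex.star_def, ← Complex.exp_conj]
      congr 1
      simp [Complex.conj_ofReal, map_ofNat]
    rw [h1, aVec, ← Complex.exp_add]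
    have h2 : ((2*Real.pi*(m:ℕ)*(i:ℕ)/M : ℝ) : ℂ) * Complex.I +
        -(((2 * Real.pi * (m : ℕ) * θ) : ℝ) : ℂ) * Complex.I
        = (((m:ℕ) * x : ℝ) : ℂ) * Complex.I + ((-((m:ℕ) * (round δ)) : ℤ) : ℂ) * (2*Real.pi*Complex.I) := by
      rw [hx, hδ]
      push_cast
      ring
    rw [h2, Complex.exp_add, Complex.exp_int_mul_two_pi_mul_I, mul_one]
    rw [← Complex.exp_nat_mul]
    congr 1
    push_cast
    ring
  rw [uVec]
  simp only [Pi.smul_apply, smul_eq_mul, Matrix.mulVec, dotProduct,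
    Matrix.conjTranspose_apply]
  rw [Finset.sum_congr rfl (fun m _ => key m)]
  rw [Fin.sum_univ_eq_sum_range (fun m => Complex.exp ((x:ℂ) * Complex.I) ^ m)]

lemma norm_exp_mul_I_sub_one (x : ℝ) :
    ‖Complex.exp ((x:ℂ) * Complex.I) - 1‖ = 2 * |Real.sin (x/2)| := by
  have key : Complex.exp ((x:ℂ) * Complex.I) - 1
      = Complex.exp (((x/2 : ℝ):ℂ) * Complex.I) * (2 * Complex.I * Complex.sin ((x/2 : ℝ):ℂ)) := by
    rw [Complex.sin]
    push_cast
    rw [show (2 : ℂ) * Complex.I * ((Complex.exp (-(↑x / 2) * Complex.I) - Complex.exp (↑x / 2 * Complex.I)) * Complex.I / 2)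
        = Complex.exp ((x/2 :ℂ) * Complex.I) - Complex.exp (-(x/2 :ℂ) * Complex.I) by
          linear_combination (Complex.exp (-(↑x/2) * Complex.I) - Complex.exp (↑x/2 * Complex.I)) * Complex.I_sq]
    rw [mul_sub, ← Complex.exp_add, ← Complex.exp_add]
    ring_nf
    rw [Complex.exp_zero]
    ring
  rw [key, norm_mul, Complex.norm_exp_ofReal_mul_I, one_mul, ← Complex.ofReal_sin]
  simp only [norm_mul, Complex.norm_real, Complex.norm_I, Real.norm_eq_abs, mul_one]
  norm_num

lemma two_mul_abs_le_abs_sin {e : ℝ} (he : |e| ≤ 1/2) :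
    2 * |e| ≤ |Real.sin (Real.pi * e)| := by
  have pi_pos := Real.pi_pos
  rcases abs_cases e with ⟨h1, h2⟩ | ⟨h1, h2⟩
  · have he' : e ≤ 1/2 := by rwa [h1] at he
    rw [h1]
    have hs : 2 * e ≤ Real.sin (Real.pi * e) := by
      have := Real.mul_le_sin (x := Real.pi * e) (by positivity) (by nlinarith)
      calc 2 * e = 2 / Real.pi * (Real.pi * e) := by field_simp
        _ ≤ _ := this
    exact hs.trans (le_abs_self _)
  · have he' : -e ≤ 1/2 := by rwa [h1] at he
    have h2' : 0 ≤ -e := by linarith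
    rw [h1]
    have hs : 2 * (-e) ≤ Real.sin (Real.pi * (-e)) := by
      have := Real.mul_le_sin (x := Real.pi * (-e)) (by positivity) (by nlinarith)
      calc 2 * (-e) = 2 / Real.pi * (Real.pi * (-e)) := by field_simp
        _ ≤ _ := this
    rw [show Real.pi * -e = -(Real.pi * e) by ring, Real.sin_neg] at hs
    calc 2 * -e ≤ -Real.sin (Real.pi * e) := hs
      _ ≤ |Real.sin (Real.pi * e)| := neg_le_abs _

lemma norm_uVec_le (M : ℕ) (hM : 0 < M) (θ : ℝ) (i : Fin M)
    (he : (θ - (i:ℝ)/M) - round (θ - (i:ℝ)/M) ≠ 0) :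
    ‖uVec M θ i‖ ≤ 1 / (2 * M * |(θ - (i:ℝ)/M) - round (θ - (i:ℝ)/M)|) := by
  set e : ℝ := (θ - (i:ℝ)/M) - round (θ - (i:ℝ)/M) with hedef
  have heabs : |e| ≤ 1/2 := abs_sub_round _
  have hepos : 0 < |e| := abs_pos.2 he
  set x : ℝ := -(2*Real.pi*e) with hx
  set z : ℂ := Complex.exp ((x:ℂ) * Complex.I) with hz
  have hzne : z ≠ 1 := by
    intro hcon
    rw [hz, Complex.exp_eq_one_iff] at hcon
    obtain ⟨n, hn⟩ := hcon
    have hxr : (x : ℂ) = ((2 * Real.pi * n : ℝ) : ℂ) := by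
      have := mul_right_cancel₀ Complex.I_ne_zero
        (hn.trans (by push_cast; ring : ((n:ℂ) * (2 * Real.pi * Complex.I)) = ((2 * Real.pi * n : ℝ):ℂ) * Complex.I))
      exact this
    have hxx : x = 2 * Real.pi * n := Complex.ofReal_inj.1 hxr
    have hen : e = -n := by
      have pi_pos := Real.pi_pos
      rw [hx] at hxx
      have : 2 * Real.pi * (e + n) = 0 := by linarith
      have h2 : e + n = 0 := by
        rcases mul_eq_zero.1 this with h | h
        · nlinarith
        · exact h
      linarith
    rcases eq_or_ne n 0 with h0 | h0
    · rw [h0] at hen; simp at hen; exact he hen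
    · have h1' : (1:ℤ) ≤ |n| := Int.one_le_abs h0
      have : (1:ℝ) ≤ |e| := by
        rw [hen, abs_neg, ← Int.cast_abs]
        exact_mod_cast h1'
      linarith
  have hsum : ∑ m ∈ Finset.range M, z ^ m = (z ^ M - 1) / (z - 1) := geom_sum_eq hzne M
  have habs_z : ‖z‖ = 1 := by rw [hz, Complex.norm_exp_ofReal_mul_I]
  have hnum : ‖z ^ M - 1‖ ≤ 2 := by
    calc ‖z ^ M - 1‖ ≤ ‖z ^ M‖ + ‖(1:ℂ)‖ := norm_sub_le _ _
      _ = 2 := by rw [norm_pow, habs_z]; norm_num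
  have hden : ‖z - 1‖ = 2 * |Real.sin (x/2)| := norm_exp_mul_I_sub_one x
  have hsin : 2 * |e| ≤ |Real.sin (x/2)| := by
    have : Real.sin (x/2) = -Real.sin (Real.pi * e) := by
      rw [hx, show -(2*Real.pi*e)/2 = -(Real.pi * e) by ring, Real.sin_neg]
    rw [this, abs_neg]
    exact two_mul_abs_le_abs_sin heabs
  have hden_pos : (0:ℝ) < 4 * |e| := by linarith
  have hnorm_sum : ‖∑ m ∈ Finset.range M, z ^ m‖ ≤ 1 / (2 * |e|) := by
    rw [hsum, norm_div, hden]
    have h1 : 4 * |e| ≤ 2 * |Real.sin (x/2)| := by linarith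
    have h2 : ‖z ^ M - 1‖ / (2 * |Real.sin (x/2)|) ≤ 2 / (4 * |e|) :=
      div_le_div₀ (by norm_num) hnum hden_pos h1
    calc ‖z ^ M - 1‖ / (2 * |Real.sin (x/2)|) ≤ 2 / (4 * |e|) := h2
      _ = 1 / (2 * |e|) := by field_simp; ring
  have huv : uVec M θ i = (1 / (M:ℂ)) * ∑ m ∈ Finset.range M, z ^ m := uVec_eq M θ i
  rw [huv, norm_mul]
  have hMpos : (0:ℝ) < M := by exact_mod_cast hM
  have : ‖(1 / (M:ℂ))‖ = 1 / M := by
    rw [norm_div, norm_one, Complex.norm_natCast]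
  rw [this]
  calc 1 / (M:ℝ) * ‖∑ m ∈ Finset.range M, z ^ m‖ ≤ 1 / (M:ℝ) * (1 / (2 * |e|)) := by
        apply mul_le_mul_of_nonneg_left hnorm_sum (by positivity)
    _ = 1 / (2 * M * |e|) := by field_simp

def eF (M : ℕ) (θ : ℝ) (i : Fin M) : ℝ := (θ - (i:ℝ)/M) - round (θ - (i:ℝ)/M)

def hF (M : ℕ) (θ : ℝ) (i : Fin M) : ℤ :=
  (i:ℤ) + M * round (θ - (i:ℝ)/M) - round ((M:ℝ)*θ)

lemma hF_cast (M : ℕ) (hM : 0 < M) (θ : ℝ) (i : Fin M) :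
    (hF M θ i : ℝ) = ((M:ℝ)*θ - round ((M:ℝ)*θ)) - M * eF M θ i := by
  have hM0 : (M:ℝ) ≠ 0 := Nat.cast_ne_zero.2 hM.ne'
  rw [hF, eF]
  push_cast
  field_simp
  ring

lemma hF_inj (M : ℕ) (θ : ℝ) : Function.Injective (hF M θ) := by
  intro i j hij
  rw [hF, hF] at hij
  have hd : (M:ℤ) ∣ ((i:ℤ) - (j:ℤ)) :=
    ⟨round (θ - (j:ℝ)/M) - round (θ - (i:ℝ)/M), by linear_combination hij⟩
  have hb : |(i:ℤ) - (j:ℤ)| < M := by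
    have h1 : (i:ℤ) < M := by exact_mod_cast i.isLt
    have h2 : (j:ℤ) < M := by exact_mod_cast j.isLt
    have h3 : (0:ℤ) ≤ i := by positivity
    have h4 : (0:ℤ) ≤ j := by positivity
    rw [abs_sub_lt_iff]; omega
  have := Int.eq_zero_of_abs_lt_dvd hd hb
  have : (i:ℤ) = (j:ℤ) := by omega
  exact Fin.ext (by exact_mod_cast this)


/-- There is a universal constant `C > 0`, independent of `θ`, `K` and
the dimension `M`, such that `u_θ` admits a `(2K+1)`-sparse approximation within
`ℓ₂`-distance `C/√K`. -/
theorem uVec_sparse_approx :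
    ∃ C : ℝ, 0 < C ∧ ∀ (M K : ℕ), 1 ≤ M → 1 ≤ K → ∀ θ : ℝ, 0 ≤ θ → θ < 1 →
      ∃ u' : Fin M → ℂ, Sparse (2 * K + 1) u' ∧
        Real.sqrt (sqnorm (u' - uVec M θ)) ≤ C / Real.sqrt K := by
  classical
  refine ⟨2, by norm_num, ?_⟩
  intro M K hM hK θ hθ0 hθ1
  have hMpos : (0:ℝ) < M := by exact_mod_cast hM
  have hKpos : (0:ℝ) < K := by exact_mod_cast hK
  have hK1 : (1:ℝ) ≤ K := by exact_mod_cast hK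
  have hround : |(M:ℝ)*θ - round ((M:ℝ)*θ)| ≤ 1/2 := abs_sub_round _
  have heabs : ∀ i : Fin M, |eF M θ i| ≤ 1/2 := fun i => abs_sub_round _
  set S : Finset (Fin M) := Finset.univ.filter (fun i => (M:ℝ) * |eF M θ i| < K) with hS
  set u' : Fin M → ℂ := fun i => if (M:ℝ) * |eF M θ i| < (K:ℝ) then uVec M θ i else 0 with hu'
  refine ⟨u', ?_, ?_⟩
  · -- sparsity
    have hsupp : Function.support u' ⊆ ↑S := by
      intro i hi
      simp only [Function.mem_support, hu'] at hi
      by_cases hc : (M:ℝ) * |eF M θ i| < (K:ℝ)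
      · simp [hS, hc]
      · exact absurd (by simp [hc]) hi
    have hmem : ∀ i ∈ S, hF M θ i ∈ Finset.Icc (-(K:ℤ)) K := by
      intro i hiS
      have hc : (M:ℝ) * |eF M θ i| < K := by
        rw [hS] at hiS; exact (Finset.mem_filter.1 hiS).2
      have h1 : |(hF M θ i : ℝ)| ≤ (M:ℝ) * |eF M θ i| + 1/2 := by
        rw [hF_cast M (by omega) θ i]
        calc |((M:ℝ)*θ - round ((M:ℝ)*θ)) - M * eF M θ i|
            ≤ |(M:ℝ)*θ - round ((M:ℝ)*θ)| + |(M:ℝ) * eF M θ i| := abs_sub _ _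
          _ ≤ (M:ℝ) * |eF M θ i| + 1/2 := by
              rw [abs_mul, abs_of_pos hMpos]; linarith
      have h2 : |(hF M θ i : ℝ)| < (K:ℝ) + 1 := by linarith
      have h3 : |hF M θ i| < (K:ℤ) + 1 := by exact_mod_cast (by push_cast; exact h2 : ((|hF M θ i| : ℤ):ℝ) < ((K:ℤ):ℝ) + 1)
      have h4 := abs_lt.1 h3
      rw [Finset.mem_Icc]
      omega
    have hcard : S.card ≤ 2 * K + 1 := by
      calc S.card ≤ (Finset.Icc (-(K:ℤ)) K).card :=
            Finset.card_le_card_of_injOn (hF M θ) hmem ((hF_inj M θ).injOn)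
        _ = 2 * K + 1 := by rw [Int.card_Icc]; omega
    calc (Function.support u').ncard ≤ (↑S : Set (Fin M)).ncard :=
          Set.ncard_le_ncard hsupp (S.finite_toSet)
      _ = S.card := Set.ncard_coe_finset S
      _ ≤ 2 * K + 1 := hcard
  · -- error bound
    set T : Finset (Fin M) := Finset.univ.filter (fun i => ¬ ((M:ℝ) * |eF M θ i| < K)) with hT
    have hsq : sqnorm (u' - uVec M θ) = ∑ i ∈ T, ‖uVec M θ i‖^2 := by
      rw [sqnorm, hT, Finset.sum_filter]
      apply Finset.sum_congr rfl
      intro i _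
      by_cases hc : (M:ℝ) * |eF M θ i| < K
      · simp [hu', hc, Pi.sub_apply]
      · simp [hu', hc, Pi.sub_apply]
    have hperelt : ∀ i ∈ T, ‖uVec M θ i‖^2 ≤ (((hF M θ i : ℝ))^2)⁻¹ := by
      intro i hiT
      have hc : (K:ℝ) ≤ (M:ℝ) * |eF M θ i| := by
        rw [hT] at hiT
        exact not_lt.1 (Finset.mem_filter.1 hiT).2
      have hMe1 : (1:ℝ) ≤ (M:ℝ) * |eF M θ i| := le_trans hK1 hc
      have hene : eF M θ i ≠ 0 := by
        intro h0
        rw [h0] at hMe1; simp at hMe1; linarith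
      have hnu : ‖uVec M θ i‖ ≤ 1 / (2 * M * |eF M θ i|) := norm_uVec_le M (by omega) θ i hene
      have hid : (hF M θ i : ℝ) = ((M:ℝ)*θ - round ((M:ℝ)*θ)) - M * eF M θ i :=
        hF_cast M (by omega) θ i
      have hup : |(hF M θ i : ℝ)| ≤ (M:ℝ) * |eF M θ i| + 1/2 := by
        rw [hid]
        calc |((M:ℝ)*θ - round ((M:ℝ)*θ)) - M * eF M θ i|
            ≤ |(M:ℝ)*θ - round ((M:ℝ)*θ)| + |(M:ℝ) * eF M θ i| := abs_sub _ _
          _ ≤ (M:ℝ) * |eF M θ i| + 1/2 := by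
              rw [abs_mul, abs_of_pos hMpos]; linarith
      have hlow : (K:ℝ) - 1/2 ≤ |(hF M θ i : ℝ)| := by
        rw [hid]
        have : (M:ℝ) * |eF M θ i| - |(M:ℝ)*θ - round ((M:ℝ)*θ)|
            ≤ |((M:ℝ)*θ - round ((M:ℝ)*θ)) - M * eF M θ i| := by
          calc (M:ℝ) * |eF M θ i| - |(M:ℝ)*θ - round ((M:ℝ)*θ)|
              = |(M:ℝ) * eF M θ i| - |(M:ℝ)*θ - round ((M:ℝ)*θ)| := by
                rw [abs_mul, abs_of_pos hMpos]
            _ ≤ _ := by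
                have hh := abs_sub_abs_le_abs_sub ((M:ℝ) * eF M θ i) ((M:ℝ)*θ - round ((M:ℝ)*θ))
                rw [show (M:ℝ)*eF M θ i - ((M:ℝ)*θ - round ((M:ℝ)*θ))
                    = -(((M:ℝ)*θ - round ((M:ℝ)*θ)) - (M:ℝ) * eF M θ i) by ring, abs_neg] at hh
                linarith
        linarith
      have hhpos : (0:ℝ) < |(hF M θ i : ℝ)| := by linarith
      have hle2 : |(hF M θ i : ℝ)| ≤ 2 * M * |eF M θ i| := by linarith
      have hnu2 : ‖uVec M θ i‖ ≤ 1 / |(hF M θ i : ℝ)| := by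
        calc ‖uVec M θ i‖ ≤ 1 / (2 * M * |eF M θ i|) := hnu
          _ ≤ 1 / |(hF M θ i : ℝ)| := by
              apply one_div_le_one_div_of_le hhpos hle2
      calc ‖uVec M θ i‖^2 ≤ (1 / |(hF M θ i : ℝ)|)^2 := by
            apply pow_le_pow_left₀ (norm_nonneg _) hnu2
        _ = (((hF M θ i : ℝ))^2)⁻¹ := by
            rw [div_pow, one_pow, sq_abs, one_div]
    have himg : ∑ i ∈ T, (((hF M θ i : ℝ))^2)⁻¹
        = ∑ n ∈ T.image (hF M θ), ((n:ℝ)^2)⁻¹ :=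
      (Finset.sum_image (f := fun n : ℤ => (((n:ℝ))^2)⁻¹) (g := hF M θ) (s := T)
        (fun i _ j _ hij => hF_inj M θ hij)).symm
    have hmaps : ∀ n ∈ T.image (hF M θ), n.natAbs ∈ Finset.Ioo (K-1) (M+1) := by
      intro n hn
      obtain ⟨i, hiT, rfl⟩ := Finset.mem_image.1 hn
      have hc : (K:ℝ) ≤ (M:ℝ) * |eF M θ i| := by
        rw [hT] at hiT
        exact not_lt.1 (Finset.mem_filter.1 hiT).2
      have hid : (hF M θ i : ℝ) = ((M:ℝ)*θ - round ((M:ℝ)*θ)) - M * eF M θ i :=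
        hF_cast M (by omega) θ i
      have hup : |(hF M θ i : ℝ)| ≤ (M:ℝ) * |eF M θ i| + 1/2 := by
        rw [hid]
        calc |((M:ℝ)*θ - round ((M:ℝ)*θ)) - M * eF M θ i|
            ≤ |(M:ℝ)*θ - round ((M:ℝ)*θ)| + |(M:ℝ) * eF M θ i| := abs_sub _ _
          _ ≤ (M:ℝ) * |eF M θ i| + 1/2 := by
              rw [abs_mul, abs_of_pos hMpos]; linarith
      have hlow : (K:ℝ) - 1/2 ≤ |(hF M θ i : ℝ)| := by
        rw [hid]
        have : (M:ℝ) * |eF M θ i| - |(M:ℝ)*θ - round ((M:ℝ)*θ)|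
            ≤ |((M:ℝ)*θ - round ((M:ℝ)*θ)) - M * eF M θ i| := by
          calc (M:ℝ) * |eF M θ i| - |(M:ℝ)*θ - round ((M:ℝ)*θ)|
              = |(M:ℝ) * eF M θ i| - |(M:ℝ)*θ - round ((M:ℝ)*θ)| := by
                rw [abs_mul, abs_of_pos hMpos]
            _ ≤ _ := by
                have hh := abs_sub_abs_le_abs_sub ((M:ℝ) * eF M θ i) ((M:ℝ)*θ - round ((M:ℝ)*θ))
                rw [show (M:ℝ)*eF M θ i - ((M:ℝ)*θ - round ((M:ℝ)*θ))
                    = -(((M:ℝ)*θ - round ((M:ℝ)*θ)) - (M:ℝ) * eF M θ i) by ring, abs_neg] at hh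
                linarith
        linarith
      have hup2 : |(hF M θ i : ℝ)| < (M:ℝ) + 1 := by
        have : (M:ℝ) * |eF M θ i| ≤ (M:ℝ) * (1/2) :=
          mul_le_mul_of_nonneg_left (heabs i) hMpos.le
        linarith
      have hlowZ : (K:ℤ) ≤ |hF M θ i| := by
        have : ((K:ℤ):ℝ) - 1 < ((|hF M θ i|:ℤ):ℝ) := by push_cast; linarith
        have := (by exact_mod_cast this : (K:ℤ) - 1 < |hF M θ i|)
        omega
      have hupZ : |hF M θ i| < (M:ℤ) + 1 := by
        have : ((|hF M θ i|:ℤ):ℝ) < ((M:ℤ):ℝ) + 1 := by push_cast; linarith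
        exact_mod_cast this
      rw [Int.abs_eq_natAbs] at hlowZ hupZ
      rw [Finset.mem_Ioo]
      omega
    have hfiber : ∑ n ∈ T.image (hF M θ), ((n:ℝ)^2)⁻¹
        = ∑ m ∈ Finset.Ioo (K-1) (M+1),
            ∑ n ∈ (T.image (hF M θ)).filter (fun n => n.natAbs = m), ((n:ℝ)^2)⁻¹ :=
      (Finset.sum_fiberwise_of_maps_to hmaps _).symm
    have hinner : ∀ m ∈ Finset.Ioo (K-1) (M+1),
        ∑ n ∈ (T.image (hF M θ)).filter (fun n => n.natAbs = m), ((n:ℝ)^2)⁻¹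
          ≤ 2 * (((m:ℕ):ℝ)^2)⁻¹ := by
      intro m hm
      have hsub : (T.image (hF M θ)).filter (fun n => n.natAbs = m)
          ⊆ ({(m:ℤ), -(m:ℤ)} : Finset ℤ) := by
        intro n hn
        have h1 : n.natAbs = m := (Finset.mem_filter.1 hn).2
        simp only [Finset.mem_insert, Finset.mem_singleton]
        omega
      have hval : ∀ n ∈ (T.image (hF M θ)).filter (fun n => n.natAbs = m),
          ((n:ℝ)^2)⁻¹ ≤ (((m:ℕ):ℝ)^2)⁻¹ := by
        intro n hn
        have h1 : n.natAbs = m := (Finset.mem_filter.1 hn).2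
        have : ((n:ℝ))^2 = (((m:ℕ):ℝ))^2 := by
          rw [← h1, Nat.cast_natAbs, Int.cast_abs, sq_abs]
        rw [this]
      calc ∑ n ∈ (T.image (hF M θ)).filter (fun n => n.natAbs = m), ((n:ℝ)^2)⁻¹
          ≤ ((T.image (hF M θ)).filter (fun n => n.natAbs = m)).card • (((m:ℕ):ℝ)^2)⁻¹ :=
            Finset.sum_le_card_nsmul _ _ _ hval
        _ ≤ 2 * (((m:ℕ):ℝ)^2)⁻¹ := by
            rw [nsmul_eq_mul]
            apply mul_le_mul_of_nonneg_right _ (by positivity)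
            have hc2 : ((T.image (hF M θ)).filter (fun n => n.natAbs = m)).card ≤ 2 := by
              calc _ ≤ ({(m:ℤ), -(m:ℤ)} : Finset ℤ).card := Finset.card_le_card hsub
                _ ≤ 2 := Finset.card_insert_le _ _ |>.trans (by simp)
            exact_mod_cast hc2
    have htail : ∑ m ∈ Finset.Ioo (K-1) (M+1), 2 * (((m:ℕ):ℝ)^2)⁻¹ ≤ 4 / K := by
      rw [← Finset.mul_sum]
      have := sum_Ioo_inv_sq_le (α := ℝ) (K-1) (M+1)
      have hcast : (((K-1:ℕ)):ℝ) + 1 = K := by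
        have : ((K-1:ℕ):ℝ) = (K:ℝ) - 1 := by
          push_cast [Nat.cast_sub hK]; ring
        rw [this]; ring
      calc 2 * ∑ m ∈ Finset.Ioo (K-1) (M+1), (((m:ℕ):ℝ)^2)⁻¹
          ≤ 2 * (2 / (((K-1:ℕ):ℝ) + 1)) := by
            apply mul_le_mul_of_nonneg_left _ (by norm_num)
            exact this
        _ = 4 / K := by rw [hcast]; ring
    have hfinal : sqnorm (u' - uVec M θ) ≤ 4 / K := by
      rw [hsq]
      calc ∑ i ∈ T, ‖uVec M θ i‖^2 ≤ ∑ i ∈ T, (((hF M θ i : ℝ))^2)⁻¹ :=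
            Finset.sum_le_sum hperelt
        _ = ∑ n ∈ T.image (hF M θ), ((n:ℝ)^2)⁻¹ := himg
        _ = ∑ m ∈ Finset.Ioo (K-1) (M+1),
              ∑ n ∈ (T.image (hF M θ)).filter (fun n => n.natAbs = m), ((n:ℝ)^2)⁻¹ := hfiber
        _ ≤ ∑ m ∈ Finset.Ioo (K-1) (M+1), 2 * (((m:ℕ):ℝ)^2)⁻¹ :=
            Finset.sum_le_sum hinner
        _ ≤ 4 / K := htail
    calc Real.sqrt (sqnorm (u' - uVec M θ)) ≤ Real.sqrt (4 / K) :=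
          Real.sqrt_le_sqrt hfinal
      _ = 2 / Real.sqrt K := by
          rw [show (4:ℝ)/K = (2/Real.sqrt K)^2 by
            rw [div_pow, Real.sq_sqrt hKpos.le]; norm_num]
          exact Real.sqrt_sq (by positivity)
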